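/- Let p ≥ 5 be prime, f_k(x) = x^2 - 2(k+1)x + (k-1)^2, and ε_k = ∑_{x=0}^{p-1} (f_1(x) f_k(x) / p). Then ∑_{k=2}^{p-1} ε_k = 4 + (p/3) - p. -/

import Mathlib

open Finset

/-- `ε_k = ∑_{x=0}^{p-1} (f_1(x) f_k(x) / p)` with
`f_k(x) = x² - 2(k+1)x + (k-1)²`. -/
def eps (p : ℕ) [Fact p.Prime] (k : ℤ) : ℤ :=
  ∑ x ∈ Finset.range p,
    legendreSym p (((x : ℤ) ^ 2 - 4 * x) *
      ((x : ℤ) ^ 2 - 2 * (k + 1) * x + (k - 1) ^ 2))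


theorem sum_shift {F : Type*} [Field F] [Fintype F] [DecidableEq F] (hF : ringChar F ≠ 2)
    {b : F} (hb : b ≠ 0) :
    ∑ x : F, quadraticChar F x * quadraticChar F (x + b) = -1 := by
  have step1 : ∑ x : F, quadraticChar F x * quadraticChar F (x + b)
      = ∑ x ∈ (univ \ {0} : Finset F), quadraticChar F (1 + b * x⁻¹) := by
    rw [← Finset.sum_subset (Finset.subset_univ (univ \ {0}))]
    · refine Finset.sum_congr rfl fun x hx => ?_
      have hx0 : x ≠ 0 := by simpa using (Finset.mem_sdiff.mp hx).2
      have : x + b = x * (1 + b * x⁻¹) := by field_simp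
      rw [this, map_mul, ← mul_assoc, ← pow_two, quadraticChar_sq_one hx0, one_mul]
    · intro x _ hx
      have : x = 0 := by simpa using hx
      simp [this]
  rw [step1]
  have step2 : ∑ x ∈ (univ \ {0} : Finset F), quadraticChar F (1 + b * x⁻¹)
      = ∑ v ∈ (univ \ {1} : Finset F), quadraticChar F v := by
    refine Finset.sum_nbij' (fun x => 1 + b * x⁻¹) (fun v => b * (v - 1)⁻¹) ?_ ?_ ?_ ?_ ?_
    · intro x hx
      have hx0 : x ≠ 0 := by simpa using (Finset.mem_sdiff.mp hx).2
      simp only [Finset.mem_sdiff, Finset.mem_univ, true_and, Finset.mem_singleton]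
      intro h
      have : b * x⁻¹ = 0 := by linear_combination h
      exact hb (by simpa [hx0] using this)
    · intro v hv
      have hv1 : v ≠ 1 := by simpa using (Finset.mem_sdiff.mp hv).2
      simp only [Finset.mem_sdiff, Finset.mem_univ, true_and, Finset.mem_singleton]
      exact mul_ne_zero hb (inv_ne_zero (sub_ne_zero.mpr hv1))
    · intro x hx
      have hx0 : x ≠ 0 := by simpa using (Finset.mem_sdiff.mp hx).2
      field_simp
      simp [hb]
    · intro v hv
      have hv1 : v ≠ 1 := by simpa using (Finset.mem_sdiff.mp hv).2
      have : v - 1 ≠ 0 := sub_ne_zero.mpr hv1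
      field_simp
      ring
    · intro x hx; rfl
  rw [step2]
  have := quadraticChar_sum_zero hF
  have h1 : ∑ v ∈ (univ \ {1} : Finset F), quadraticChar F v
      = (∑ v : F, quadraticChar F v) - quadraticChar F 1 := by
    rw [Finset.sum_sdiff_eq_sub (Finset.subset_univ _), Finset.sum_singleton]
  rw [h1, this, map_one]; ring

theorem sum_sq_sub {F : Type*} [Field F] [Fintype F] [DecidableEq F] (hF : ringChar F ≠ 2)
    {d : F} (hd : d ≠ 0) :
    ∑ y : F, quadraticChar F (y ^ 2 - d) = -1 := by
  have key : ∀ a : F, ∑ y ∈ univ.filter (fun y : F => y ^ 2 = a), quadraticChar F (y ^ 2 - d)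
      = (quadraticChar F a + 1) * quadraticChar F (a - d) := by
    intro a
    have h1 : ∑ y ∈ univ.filter (fun y : F => y ^ 2 = a), quadraticChar F (y ^ 2 - d)
        = ∑ _y ∈ univ.filter (fun y : F => y ^ 2 = a), quadraticChar F (a - d) := by
      refine Finset.sum_congr rfl fun y hy => ?_
      rw [(Finset.mem_filter.mp hy).2]
    rw [h1, Finset.sum_const, nsmul_eq_mul]
    congr 1
    have := quadraticChar_card_sqrts hF a
    rw [← this]
    congr 1
    rw [Set.toFinset_setOf]
  calc ∑ y : F, quadraticChar F (y ^ 2 - d)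
      = ∑ a : F, ∑ y ∈ univ.filter (fun y : F => y ^ 2 = a), quadraticChar F (y ^ 2 - d) :=
        (Finset.sum_fiberwise _ _ _).symm
    _ = ∑ a : F, (quadraticChar F a + 1) * quadraticChar F (a - d) := by
        exact Finset.sum_congr rfl fun a _ => key a
    _ = (∑ a : F, quadraticChar F a * quadraticChar F (a + -d))
        + ∑ a : F, quadraticChar F (a - d) := by
        rw [← Finset.sum_add_distrib]
        refine Finset.sum_congr rfl fun a _ => ?_
        rw [sub_eq_add_neg]; ring
    _ = -1 + 0 := by
        rw [sum_shift hF (neg_ne_zero.mpr hd)]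
        congr 1
        rw [← quadraticChar_sum_zero hF]
        exact Fintype.sum_equiv (Equiv.subRight d) _ _ fun y => rfl
    _ = -1 := by ring

theorem sum_quad {F : Type*} [Field F] [Fintype F] [DecidableEq F] (hF : ringChar F ≠ 2)
    (b c : F) (hd : b ^ 2 - 4 * c ≠ 0) :
    ∑ x : F, quadraticChar F (x ^ 2 + b * x + c) = -1 := by
  have h2 : (2 : F) ≠ 0 := Ring.two_ne_zero hF
  have h4 : ∀ x : F, quadraticChar F (x ^ 2 + b * x + c)
      = quadraticChar F ((2 * x + b) ^ 2 - (b ^ 2 - 4 * c)) := by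
    intro x
    have : (2 * x + b) ^ 2 - (b ^ 2 - 4 * c) = 2 ^ 2 * (x ^ 2 + b * x + c) := by ring
    rw [this, map_mul, map_pow, quadraticChar_sq_one h2, one_mul]
  calc ∑ x : F, quadraticChar F (x ^ 2 + b * x + c)
      = ∑ x : F, quadraticChar F ((2 * x + b) ^ 2 - (b ^ 2 - 4 * c)) :=
        Finset.sum_congr rfl fun x _ => h4 x
    _ = ∑ y : F, quadraticChar F (y ^ 2 - (b ^ 2 - 4 * c)) := by
        refine Fintype.sum_equiv ((Equiv.mulLeft₀ 2 h2).trans (Equiv.addRight b)) _ _ fun x => rfl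
    _ = -1 := sum_sq_sub hF hd

def Efun (p : ℕ) [Fact p.Prime] (t : ZMod p) : ℤ :=
  ∑ x : ZMod p, quadraticChar (ZMod p)
    ((x ^ 2 - 4 * x) * (x ^ 2 - 2 * (t + 1) * x + (t - 1) ^ 2))

lemma eps_eq (p : ℕ) [Fact p.Prime] (k : ℤ) : eps p k = Efun p (k : ZMod p) := by
  haveI : NeZero p := ⟨(Fact.out : p.Prime).ne_zero⟩
  unfold eps Efun
  have h : ∀ x : ℕ, legendreSym p (((x:ℤ)^2 - 4*x) * ((x:ℤ)^2 - 2*(k+1)*x + (k-1)^2))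
      = quadraticChar (ZMod p) (((x:ZMod p)^2 - 4*(x:ZMod p)) *
        ((x:ZMod p)^2 - 2*((k:ZMod p)+1)*(x:ZMod p) + ((k:ZMod p)-1)^2)) := by
    intro x
    rw [legendreSym]
    congr 1
    push_cast
    ring
  rw [Finset.sum_congr rfl fun x _ => h x]
  refine Finset.sum_nbij' (fun x : ℕ => ((x : ZMod p))) (fun z : ZMod p => z.val)
    (fun a _ => Finset.mem_univ _) (fun z _ => Finset.mem_range.mpr (ZMod.val_lt z))
    (fun a ha => ZMod.val_cast_of_lt (Finset.mem_range.mp ha))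
    (fun z _ => by show ((z.val : ℕ) : ZMod p) = z; rw [ZMod.natCast_val, ZMod.cast_id]) (fun a _ => rfl)

section Main
variable (p : ℕ) [Fact p.Prime] (hp : 5 ≤ p)

lemma sum_Efun_full (hp : 5 ≤ p) : ∑ t : ZMod p, Efun p t = 1 := by
  have hp2 : p ≠ 2 := by omega
  have hchar : ringChar (ZMod p) ≠ 2 := by rw [ZMod.ringChar_zmod_n]; exact hp2
  have h2 : (2 : ZMod p) ≠ 0 := Ring.two_ne_zero hchar
  have h16 : (16 : ZMod p) ≠ 0 := by
    have : (16 : ZMod p) = 2 ^ 4 := by norm_num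
    rw [this]; exact pow_ne_zero _ h2
  have hswap : ∑ t : ZMod p, Efun p t
      = ∑ x : ZMod p, ∑ t : ZMod p, quadraticChar (ZMod p)
        ((x ^ 2 - 4 * x) * (x ^ 2 - 2 * (t + 1) * x + (t - 1) ^ 2)) := by
    unfold Efun; exact Finset.sum_comm
  rw [hswap]
  have hx : ∀ x : ZMod p, (∑ t : ZMod p, quadraticChar (ZMod p)
      ((x ^ 2 - 4 * x) * (x ^ 2 - 2 * (t + 1) * x + (t - 1) ^ 2)))
      = quadraticChar (ZMod p) (x ^ 2 - 4 * x) * (-1) := by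
    intro x
    by_cases hx0 : x = 0
    · subst hx0
      simp only [zero_pow, ne_eq, OfNat.ofNat_ne_zero, not_false_eq_true, mul_zero, sub_zero]
      norm_num
    · have hsq : ∀ t : ZMod p, (x ^ 2 - 4 * x) * (x ^ 2 - 2 * (t + 1) * x + (t - 1) ^ 2)
          = (x ^ 2 - 4 * x) * (t ^ 2 + (-(2 * (x + 1))) * t + (x - 1) ^ 2) := fun t => by ring
      calc (∑ t : ZMod p, quadraticChar (ZMod p)
            ((x ^ 2 - 4 * x) * (x ^ 2 - 2 * (t + 1) * x + (t - 1) ^ 2)))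
          = ∑ t : ZMod p, quadraticChar (ZMod p) (x ^ 2 - 4 * x)
              * quadraticChar (ZMod p) (t ^ 2 + (-(2 * (x + 1))) * t + (x - 1) ^ 2) := by
            refine Finset.sum_congr rfl fun t _ => ?_
            rw [hsq t, map_mul]
        _ = quadraticChar (ZMod p) (x ^ 2 - 4 * x) * (-1) := by
            rw [← Finset.mul_sum]
            congr 1
            refine sum_quad hchar _ _ ?_
            have : (-(2 * (x + 1))) ^ 2 - 4 * (x - 1) ^ 2 = 16 * x := by ring
            rw [this]
            exact mul_ne_zero h16 hx0
  rw [Finset.sum_congr rfl fun x _ => hx x]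
  have : ∑ x : ZMod p, quadraticChar (ZMod p) (x ^ 2 - 4 * x) = -1 := by
    have h : ∀ x : ZMod p, x ^ 2 - 4 * x = x ^ 2 + (-4) * x + 0 := fun x => by ring
    rw [Finset.sum_congr rfl fun x _ => congrArg _ (h x)]
    refine sum_quad hchar _ _ ?_
    have : (-4 : ZMod p) ^ 2 - 4 * 0 = 16 := by norm_num
    rw [this]; exact h16
  rw [← Finset.sum_mul, this]; norm_num

lemma sum_f1 (hp : 5 ≤ p) : ∑ x : ZMod p, quadraticChar (ZMod p) (x ^ 2 - 4 * x) = -1 := by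
  have hp2 : p ≠ 2 := by omega
  have hchar : ringChar (ZMod p) ≠ 2 := by rw [ZMod.ringChar_zmod_n]; exact hp2
  have h2 : (2 : ZMod p) ≠ 0 := Ring.two_ne_zero hchar
  have h16 : (16 : ZMod p) ≠ 0 := by
    have : (16 : ZMod p) = 2 ^ 4 := by norm_num
    rw [this]; exact pow_ne_zero _ h2
  have h : ∀ x : ZMod p, x ^ 2 - 4 * x = x ^ 2 + (-4) * x + 0 := fun x => by ring
  rw [Finset.sum_congr rfl fun x _ => congrArg _ (h x)]
  refine sum_quad hchar _ _ ?_
  have : (-4 : ZMod p) ^ 2 - 4 * 0 = 16 := by norm_num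
  rw [this]; exact h16

lemma Efun_zero (hp : 5 ≤ p) : Efun p 0 = -1 - quadraticChar (ZMod p) (-3) := by
  have hp2 : p ≠ 2 := by omega
  have hchar : ringChar (ZMod p) ≠ 2 := by rw [ZMod.ringChar_zmod_n]; exact hp2
  unfold Efun
  have key : ∀ x ∈ (univ \ {1} : Finset (ZMod p)), quadraticChar (ZMod p)
      ((x ^ 2 - 4 * x) * (x ^ 2 - 2 * (0 + 1) * x + (0 - 1) ^ 2))
      = quadraticChar (ZMod p) (x ^ 2 - 4 * x) := by
    intro x hx
    have hx1 : x ≠ 1 := by simpa using (Finset.mem_sdiff.mp hx).2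
    have : (x ^ 2 - 4 * x) * (x ^ 2 - 2 * (0 + 1) * x + (0 - 1) ^ 2)
        = (x ^ 2 - 4 * x) * (x - 1) ^ 2 := by ring
    rw [this, map_mul, map_pow, quadraticChar_sq_one (sub_ne_zero.mpr hx1), mul_one]
  rw [← Finset.sum_sdiff (Finset.subset_univ ({1} : Finset (ZMod p))),
    Finset.sum_congr rfl key, Finset.sum_sdiff_eq_sub (Finset.subset_univ _),
    sum_f1 p hp, Finset.sum_singleton, Finset.sum_singleton]
  have e1 : ((1 : ZMod p) ^ 2 - 4 * 1) = -3 := by norm_num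
  have e2 : ((1 : ZMod p) ^ 2 - 2 * (0 + 1) * 1 + (0 - 1) ^ 2) = 0 := by ring
  rw [e1, e2, mul_zero, MulChar.map_zero]
  ring

lemma Efun_one (hp : 5 ≤ p) : Efun p 1 = (p : ℤ) - 2 := by
  have hp2 : p ≠ 2 := by omega
  have hchar : ringChar (ZMod p) ≠ 2 := by rw [ZMod.ringChar_zmod_n]; exact hp2
  have h2 : (2 : ZMod p) ≠ 0 := Ring.two_ne_zero hchar
  have h4 : (4 : ZMod p) ≠ 0 := by
    have : (4 : ZMod p) = 2 ^ 2 := by norm_num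
    rw [this]; exact pow_ne_zero _ h2
  unfold Efun
  have key : ∀ x : ZMod p, quadraticChar (ZMod p)
      ((x ^ 2 - 4 * x) * (x ^ 2 - 2 * (1 + 1) * x + (1 - 1) ^ 2))
      = if x ^ 2 - 4 * x = 0 then 0 else 1 := by
    intro x
    have : (x ^ 2 - 4 * x) * (x ^ 2 - 2 * (1 + 1) * x + (1 - 1) ^ 2)
        = (x ^ 2 - 4 * x) ^ 2 := by ring
    rw [this]
    by_cases h : x ^ 2 - 4 * x = 0
    · simp [h]
    · rw [map_pow, quadraticChar_sq_one h, if_neg h]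
  rw [Finset.sum_congr rfl fun x _ => key x]
  have hstep : ∑ x : ZMod p, (if x ^ 2 - 4 * x = 0 then (0:ℤ) else 1)
      = ∑ x : ZMod p, (if ¬ (x ^ 2 - 4 * x = 0) then (1:ℤ) else 0) := by
    refine Finset.sum_congr rfl fun x _ => ?_
    by_cases h : x ^ 2 - 4 * x = 0 <;> simp [h]
  rw [hstep, Finset.sum_boole]
  have hP : (univ.filter fun x : ZMod p => x ^ 2 - 4 * x = 0) = {0, 4} := by
    ext x
    simp only [Finset.mem_filter, Finset.mem_univ, true_and, Finset.mem_insert,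
      Finset.mem_singleton]
    constructor
    · intro h
      have hx : x * (x - 4) = 0 := by linear_combination h
      rcases mul_eq_zero.mp hx with h | h
      · exact Or.inl h
      · exact Or.inr (sub_eq_zero.mp h)
    · rintro (rfl | rfl) <;> ring
  have hcard : (univ.filter fun x : ZMod p => ¬ (x ^ 2 - 4 * x = 0)).card = p - 2 := by
    rw [Finset.filter_not, hP, Finset.card_sdiff_of_subset (Finset.subset_univ _)]
    congr 1
    · simp [ZMod.card]
    · rw [Finset.card_insert_of_notMem (by simpa using Ne.symm h4), Finset.card_singleton]
  rw [hcard, Nat.cast_sub (by omega)]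
  norm_num

lemma reindex_k (hp : 5 ≤ p) :
    ∑ k ∈ Finset.Icc (2 : ℤ) ((p : ℤ) - 1), Efun p (k : ZMod p)
      = ∑ t ∈ (univ \ {0, 1} : Finset (ZMod p)), Efun p t := by
  haveI : NeZero p := ⟨(Fact.out : p.Prime).ne_zero⟩
  have hval : ∀ k : ℤ, k ∈ Finset.Icc (2 : ℤ) ((p : ℤ) - 1) →
      (((k : ZMod p)).val : ℤ) = k := by
    intro k hk
    rw [Finset.mem_Icc] at hk
    rw [ZMod.val_intCast]
    exact Int.emod_eq_of_lt (by omega) (by omega)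
  refine Finset.sum_nbij' (fun k : ℤ => ((k : ZMod p))) (fun t : ZMod p => (t.val : ℤ))
    ?_ ?_ ?_ ?_ ?_
  · intro k hk
    have h := hval k hk
    rw [Finset.mem_Icc] at hk
    simp only [Finset.mem_sdiff, Finset.mem_univ, true_and, Finset.mem_insert,
      Finset.mem_singleton]
    push_neg
    constructor
    · intro h0; rw [h0, ZMod.val_zero] at h; omega
    · intro h1; rw [h1, ZMod.val_one] at h; omega
  · intro t ht
    show ((t.val : ℤ)) ∈ Finset.Icc (2 : ℤ) ((p : ℤ) - 1)
    simp only [Finset.mem_sdiff, Finset.mem_univ, true_and, Finset.mem_insert,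
      Finset.mem_singleton] at ht
    push_neg at ht
    have hlt := ZMod.val_lt t
    have h0 : t.val ≠ 0 := fun h => ht.1 ((ZMod.val_eq_zero t).mp h)
    have h1 : t.val ≠ 1 := by
      intro h
      apply ht.2
      have : ((t.val : ℕ) : ZMod p) = t := by rw [ZMod.natCast_val, ZMod.cast_id]
      rw [← this, h, Nat.cast_one]
    rw [Finset.mem_Icc]
    omega
  · intro k hk; exact hval k hk
  · intro t _
    show (((t.val : ℤ) : ZMod p)) = t
    push_cast
    rw [ZMod.natCast_val, ZMod.cast_id]
  · intro k _; rfl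

lemma chi_neg_three (hp : 5 ≤ p) :
    quadraticChar (ZMod p) (-3) = legendreSym 3 p := by
  have hp2 : p ≠ 2 := by omega
  have hodd : p % 2 = 1 := ((Fact.out : p.Prime).eq_two_or_odd).resolve_left hp2
  have h1 : legendreSym p (-3) = quadraticChar (ZMod p) (-3) := by
    rw [legendreSym]; norm_num
  have h2 : legendreSym p (-3) = legendreSym p (-1) * legendreSym p 3 := by
    rw [← legendreSym.mul]; norm_num
  have h3 : legendreSym 3 p = (-1) ^ (p / 2) * legendreSym p 3 := by
    have := legendreSym.quadratic_reciprocity' (p := p) (q := 3) hp2 (by norm_num)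
    simpa using this
  rw [← h1, h2, legendreSym.at_neg_one hp2, ZMod.χ₄_eq_neg_one_pow hodd, h3]

theorem epsilon_sum' (hp : 5 ≤ p) :
    ∑ k ∈ Finset.Icc (2 : ℤ) ((p : ℤ) - 1), eps p k =
      4 + legendreSym 3 p - p := by
  have h01 : (0 : ZMod p) ≠ 1 := zero_ne_one
  calc ∑ k ∈ Finset.Icc (2 : ℤ) ((p : ℤ) - 1), eps p k
      = ∑ k ∈ Finset.Icc (2 : ℤ) ((p : ℤ) - 1), Efun p (k : ZMod p) :=
        Finset.sum_congr rfl fun k _ => eps_eq p k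
    _ = ∑ t ∈ (univ \ {0, 1} : Finset (ZMod p)), Efun p t := reindex_k p hp
    _ = (∑ t : ZMod p, Efun p t) - (Efun p 0 + Efun p 1) := by
        rw [Finset.sum_sdiff_eq_sub (Finset.subset_univ _), Finset.sum_pair h01]
    _ = 1 - ((-1 - quadraticChar (ZMod p) (-3)) + ((p : ℤ) - 2)) := by
        rw [sum_Efun_full p hp, Efun_zero p hp, Efun_one p hp]
    _ = 4 + legendreSym 3 p - p := by rw [chi_neg_three p hp]; ring

end Main

theorem epsilon_sum (p : ℕ) [Fact p.Prime] (hp : 5 ≤ p) :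
    ∑ k ∈ Finset.Icc (2 : ℤ) ((p : ℤ) - 1), eps p k =
      4 + legendreSym 3 p - p := epsilon_sum' p hp
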